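/- There exists a constant c > 0 such that for every n ≥ 1 there is a binary word w of length n having at least c·n^{3/2} distinct square vectors. Equivalently, the maximum number of Abelian-nonequivalent Abelian-square subwords of a word of length n over an alphabet of size at least 2 is Ω(n^{3/2}). -/

import Mathlib

/-- `(r, ℓ)` is a square vector of a binary word `w` if `w` has a fragment `u ++ v` with
`|u| = |v|` such that each of `u` and `v` contains exactly `r` zeros and exactly `ℓ` ones. -/
def SquareVector (w : List (Fin 2)) (r ℓ : ℕ) : Prop :=
  ∃ x u v y : List (Fin 2), w = x ++ u ++ v ++ y ∧ u.length = v.length ∧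
    u.count 0 = r ∧ u.count 1 = ℓ ∧ v.count 0 = r ∧ v.count 1 = ℓ

namespace AbSqAux


def rep (l : List (Fin 2)) (n : ℕ) : List (Fin 2) := (List.replicate n l).flatten

lemma rep_add (l : List (Fin 2)) (a b : ℕ) : rep l (a + b) = rep l a ++ rep l b := by
  rw [rep, rep, rep, List.replicate_add, List.flatten_append]

lemma rep_one (l : List (Fin 2)) : rep l 1 = l := by simp [rep]

lemma rep_count (c : Fin 2) (l : List (Fin 2)) (n : ℕ) :
    (rep l n).count c = n * l.count c := by
  simp [rep, List.count_flatten, List.map_replicate, List.sum_replicate, smul_eq_mul]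

lemma rep_length (l : List (Fin 2)) (n : ℕ) : (rep l n).length = n * l.length := by
  simp [rep]

lemma rep_split5 (l : List (Fin 2)) (A B C : ℕ) :
    rep l (A + 1 + B + 1 + C) = rep l A ++ l ++ rep l B ++ l ++ rep l C := by
  simp [rep_add, rep_one, List.append_assoc]

lemma rep_split3 (l : List (Fin 2)) (A C : ℕ) :
    rep l (A + 1 + C) = rep l A ++ l ++ rep l C := by
  simp [rep_add, rep_one, List.append_assoc]

lemma merge1 (a b : ℕ) (c : Fin 2) (l : List (Fin 2)) :
    List.replicate a c ++ (List.replicate b c ++ l) = List.replicate (a + b) c ++ l := by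
  rw [← List.append_assoc, ← List.replicate_add]

lemma len01 (l : List (Fin 2)) : l.length = l.count 0 + l.count 1 := by
  induction l with
  | nil => simp
  | cons a l ih => fin_cases a <;> simp [List.count_cons, ih] <;> omega

def BG (K : ℕ) : List (Fin 2) := List.replicate (4*K+2) 0 ++ List.replicate (4*K) 1
def BD (K : ℕ) : List (Fin 2) := List.replicate (4*K+4) 0 ++ List.replicate (4*K) 1
def word (K pad : ℕ) : List (Fin 2) := rep (BG K) K ++ rep (BD K) K ++ List.replicate pad 0

lemma word_length (K pad : ℕ) : (word K pad).length = 16*(K*K) + 6*K + pad := by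
  simp [word, rep_length, BG, BD]; ring

lemma witness (K A e F x x' pad : ℕ) (hK : K = A + e + 2*F + 3) (hx : x + x' = 4*K) :
    SquareVector (word K pad) ((2*(e+1+F)+1)*(2*K+1) + (e+1)) (4*K*(e+1+F) + x) := by
  refine ⟨rep (BG K) A ++ List.replicate (4*K+2) 0 ++ List.replicate x' 1,
    List.replicate x 1 ++ rep (BG K) (e+1+F) ++ List.replicate (2*A+3*e+4*F+8) 0,
    List.replicate (2*A+e+4*F+6) 0 ++ List.replicate (4*K) 1 ++ rep (BG K) F ++ rep (BD K) e
      ++ List.replicate (4*K+4) 0 ++ List.replicate x 1,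
    List.replicate x' 1 ++ rep (BD K) (A+2*F+2) ++ List.replicate pad 0,
    ?_, ?_, ?_, ?_, ?_, ?_⟩
  · -- concatenation identity
    have hG : rep (BG K) K = rep (BG K) A ++ BG K ++ rep (BG K) (e+1+F) ++ BG K ++ rep (BG K) F := by
      have h := rep_split5 (BG K) A (e+1+F) F
      rw [show A + 1 + (e+1+F) + 1 + F = K from by omega] at h
      exact h
    have hD : rep (BD K) K = rep (BD K) e ++ BD K ++ rep (BD K) (A+2*F+2) := by
      have h := rep_split3 (BD K) e (A+2*F+2)
      rw [show e + 1 + (A+2*F+2) = K from by omega] at h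
      exact h
    rw [word, hG, hD]
    simp only [BG, BD, List.append_assoc]
    rw [merge1 x' x 1, merge1 (2*A+3*e+4*F+8) (2*A+e+4*F+6) 0, merge1 x x' 1]
    rw [show x' + x = 4*K from by omega, show (2*A+3*e+4*F+8) + (2*A+e+4*F+6) = 4*K+2 from by omega,
      hx]
  · -- lengths equal
    subst hK
    simp only [List.length_append, List.length_replicate, rep_length, BG, BD]
    ring
  · subst hK
    simp only [List.count_append, List.count_replicate, rep_count, BG, BD]
    norm_num
    ring
  · subst hK
    simp only [List.count_append, List.count_replicate, rep_count, BG, BD]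
    norm_num
    ring
  · subst hK
    simp only [List.count_append, List.count_replicate, rep_count, BG, BD]
    norm_num
    ring
  · subst hK
    simp only [List.count_append, List.count_replicate, rep_count, BG, BD]
    norm_num
    ring



lemma sv_finite (w : List (Fin 2)) : {p : ℕ × ℕ | SquareVector w p.1 p.2}.Finite := by
  apply Set.Finite.subset (Set.finite_Iic (w.length, w.length))
  rintro ⟨r, l⟩ ⟨a, u, v, b, hw, -, h0, h1, -, -⟩
  have hu : u.length ≤ w.length := by
    rw [hw]; simp only [List.length_append]; omega
  simp only [Set.mem_Iic, Prod.le_def]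
  constructor
  · calc (r, l).1 = u.count 0 := h0.symm
      _ ≤ u.length := List.count_le_length
      _ ≤ w.length := hu
  · calc (r, l).2 = u.count 1 := h1.symm
      _ ≤ u.length := List.count_le_length
      _ ≤ w.length := hu

lemma trivial_mem (w : List (Fin 2)) : ((0, 0) : ℕ × ℕ) ∈ {p : ℕ × ℕ | SquareVector w p.1 p.2} :=
  ⟨[], [], [], w, by simp, rfl, rfl, rfl, rfl, rfl⟩

lemma one_le_ncard (w : List (Fin 2)) :
    1 ≤ {p : ℕ × ℕ | SquareVector w p.1 p.2}.ncard := by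
  have h := Set.ncard_le_ncard (Set.singleton_subset_iff.mpr (trivial_mem w)) (sv_finite w)
  simpa using h


end AbSqAux

set_option maxHeartbeats 2000000

open AbSqAux in
/-- There is a constant `c > 0` such that for every `n ≥ 1` there is a binary word of
length `n` with at least `c · n^{3/2}` distinct square vectors; i.e., the maximum number of
Abelian-nonequivalent Abelian-square subwords of a word of length `n` over an alphabet of
size at least 2 is `Ω(n^{3/2})`. -/
theorem abelian_nonequivalent_squares_lower_bound :
    ∃ c : ℝ, 0 < c ∧ ∀ n : ℕ, 1 ≤ n → ∃ w : List (Fin 2), w.length = n ∧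
      c * (n : ℝ) ^ ((3 : ℝ) / 2) ≤
        ({p : ℕ × ℕ | SquareVector w p.1 p.2}.ncard : ℝ) := by
  classical
  refine ⟨1/1000000, by norm_num, ?_⟩
  intro n hn
  by_cases hsmall : n ≤ 10000
  · refine ⟨List.replicate n 0, by simp, ?_⟩
    have hone : (1:ℕ) ≤ {p : ℕ × ℕ | SquareVector (List.replicate n 0) p.1 p.2}.ncard :=
      one_le_ncard _
    have h1 : (n:ℝ) ≤ ((100:ℝ))^(2:ℕ) := by
      norm_num
      exact_mod_cast hsmall
    have h2 : (n:ℝ)^((3:ℝ)/2) ≤ (((100:ℝ))^(2:ℕ))^((3:ℝ)/2) :=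
      Real.rpow_le_rpow (by positivity) h1 (by norm_num)
    have h3 : (((100:ℝ))^(2:ℕ))^((3:ℝ)/2) = 1000000 := by
      rw [← Real.rpow_natCast (100:ℝ) 2, ← Real.rpow_mul (by norm_num)]
      rw [show ((2:ℕ):ℝ)*((3:ℝ)/2) = ((3:ℕ):ℝ) by norm_num, Real.rpow_natCast]
      norm_num
    have hone' : (1:ℝ) ≤ ({p : ℕ × ℕ | SquareVector (List.replicate n 0) p.1 p.2}.ncard : ℝ) := by
      exact_mod_cast hone
    rw [h3] at h2
    nlinarith [h2, hone']
  · push_neg at hsmall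
    set s := Nat.sqrt n with hs
    have hs100 : 100 ≤ s := Nat.le_sqrt.mpr (by omega)
    set K := s / 5 with hKdef
    have hK20 : 20 ≤ K := by omega
    have h5K : 5*K ≤ s := by omega
    have hssn : s*s ≤ n := by
      have := Nat.sqrt_le' n
      simpa [pow_two] using this
    have h25 : 25*(K*K) ≤ s*s := by
      have h := Nat.mul_le_mul h5K h5K
      nlinarith
    have hKK : 20*K ≤ K*K := by nlinarith
    have hn0 : 16*(K*K) + 6*K ≤ n := by nlinarith
    set pad := n - (16*(K*K) + 6*K) with hpad
    refine ⟨word K pad, by rw [word_length]; omega, ?_⟩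
    set S := {p : ℕ × ℕ | SquareVector (word K pad) p.1 p.2} with hS
    have hfin : S.Finite := sv_finite _
    set f : ℕ × ℕ × ℕ → ℕ × ℕ :=
      fun t => ((2*t.1+1)*(2*K+1) + t.2.1, 4*K*t.1 + t.2.2) with hf
    set I : Finset (ℕ × ℕ × ℕ) :=
      Finset.Icc (K/4) (K/2 - 1) ×ˢ (Finset.Icc 1 (K/4) ×ˢ Finset.range (4*K)) with hI
    have hmem : ∀ t ∈ I, f t ∈ S := by
      rintro ⟨q, E, x⟩ ht
      simp only [hI, Finset.mem_product, Finset.mem_Icc, Finset.mem_range] at ht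
      obtain ⟨⟨hq1, hq2⟩, ⟨hE1, hE2⟩, hx⟩ := ht
      have h := witness K (K+E-2*q-2) (E-1) (q-E) x (4*K-x) pad (by omega) (by omega)
      rw [show (E-1)+1+(q-E) = q from by omega, show (E-1)+1 = E from by omega] at h
      exact h
    have hinj : Set.InjOn f ↑I := by
      rintro ⟨q, E, x⟩ hq ⟨q', E', x'⟩ hq' heq
      simp only [hI, Finset.coe_product, Set.mem_prod, Finset.mem_coe, Finset.mem_Icc,
        Finset.mem_range] at hq hq'
      obtain ⟨⟨hq1, hq2⟩, ⟨hE1, hE2⟩, hx⟩ := hq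
      obtain ⟨⟨hq1', hq2'⟩, ⟨hE1', hE2'⟩, hx'⟩ := hq'
      simp only [hf, Prod.mk.injEq] at heq
      obtain ⟨h1, h2⟩ := heq
      have hqq : q = q' := by
        rcases lt_trichotomy q q' with hlt | he | hgt
        · have hm := Nat.mul_le_mul_left (4*K) (show q+1 ≤ q' from hlt)
          rw [Nat.mul_add, Nat.mul_one] at hm
          omega
        · exact he
        · have hm := Nat.mul_le_mul_left (4*K) (show q'+1 ≤ q from hgt)
          rw [Nat.mul_add, Nat.mul_one] at hm
          omega
      subst hqq
      have hxx : x = x' := Nat.add_left_cancel h2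
      have hEE : E = E' := Nat.add_left_cancel h1
      simp [hxx, hEE]
    have hsub : ↑(I.image f) ⊆ S := by
      intro p hp
      simp only [Finset.coe_image, Set.mem_image, Finset.mem_coe] at hp
      obtain ⟨t, ht, rfl⟩ := hp
      exact hmem t ht
    have hcard1 : (I.image f).card ≤ S.ncard := by
      rw [← Set.ncard_coe_finset]
      exact Set.ncard_le_ncard hsub hfin
    have hcard2 : (I.image f).card = I.card := Finset.card_image_of_injOn hinj
    have hIcard : I.card = (K/2 - 1 + 1 - K/4) * ((K/4 + 1 - 1) * (4*K)) := by
      rw [hI, Finset.card_product, Finset.card_product, Nat.card_Icc, Nat.card_Icc,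
        Finset.card_range]
    have hQ : K ≤ 8*(K/2 - 1 + 1 - K/4) := by omega
    have hP : K ≤ 8*(K/4 + 1 - 1) := by omega
    have hKKK : K*K*K ≤ 16 * I.card := by
      rw [hIcard]
      calc K*K*K ≤ (8*(K/2 - 1 + 1 - K/4)) * (8*(K/4 + 1 - 1)) * K :=
            Nat.mul_le_mul (Nat.mul_le_mul hQ hP) (le_refl K)
        _ = 16 * ((K/2 - 1 + 1 - K/4) * ((K/4 + 1 - 1) * (4*K))) := by ring
    have hsucc : n < (s+1)*(s+1) := Nat.lt_succ_sqrt n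
    have hs6 : s + 1 ≤ 6*K := by omega
    have hn36 : n ≤ 36*(K*K) := by nlinarith [Nat.mul_le_mul hs6 hs6]
    have hrpow : (n:ℝ) ^ ((3:ℝ)/2) ≤ 216 * (K:ℝ)^3 := by
      have h1 : (n:ℝ) ≤ ((6*(K:ℝ)))^(2:ℕ) := by
        have : (n:ℝ) ≤ ((36*(K*K) : ℕ) : ℝ) := by exact_mod_cast hn36
        push_cast at this
        nlinarith [this]
      have h2 : (n:ℝ)^((3:ℝ)/2) ≤ ((6*(K:ℝ))^(2:ℕ))^((3:ℝ)/2) :=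
        Real.rpow_le_rpow (by positivity) h1 (by norm_num)
      have h3 : ((6*(K:ℝ))^(2:ℕ))^((3:ℝ)/2) = (6*(K:ℝ))^(3:ℕ) := by
        rw [← Real.rpow_natCast (6*(K:ℝ)) 2, ← Real.rpow_mul (by positivity)]
        rw [show ((2:ℕ):ℝ)*((3:ℝ)/2) = ((3:ℕ):ℝ) by norm_num, Real.rpow_natCast]
      rw [h3] at h2
      nlinarith [h2]
    have hfinal : (K:ℝ)^3 ≤ 16 * (S.ncard : ℝ) := by
      have h : (K*K*K : ℕ) ≤ 16 * S.ncard := by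
        calc K*K*K ≤ 16 * I.card := hKKK
          _ = 16 * (I.image f).card := by rw [hcard2]
          _ ≤ 16 * S.ncard := by omega
      have h' : ((K*K*K : ℕ) : ℝ) ≤ ((16 * S.ncard : ℕ) : ℝ) := by exact_mod_cast h
      push_cast at h'
      nlinarith [h']
    nlinarith [hrpow, hfinal]
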